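/- Let a, b, k be positive integers with gcd(a, b) = 1, and let S = ⟨a^k, a^{k−1}b, …, a b^{k−1}, b^k⟩ be the geometric numerical semigroup generated by the terms a^{k−i} b^i for i = 0, …, k. Then at least one of a, b is odd, and O(G(S)) − E(G(S)) equals 0 if both a and b are odd; equals (a^k − 1)/2 if a is odd and b is even; and equals (b^k − 1)/2 if a is even and b is odd. -/

import Mathlib

/-- The monoid `⟨t_0, …, t_{n-1}⟩` of all nonnegative integer linear combinations of
the first `n` terms of the sequence `t`. -/
def genBy (t : ℕ → ℕ) (n : ℕ) : Set ℕ :=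
  {s | ∃ x : ℕ → ℕ, s = ∑ i ∈ Finset.range n, x i * t i}

/-- `d_i = gcd(t_0, …, t_i)`. -/
def seqD (t : ℕ → ℕ) (i : ℕ) : ℕ := Finset.gcd (Finset.range (i + 1)) t

/-- `c_j = d_{j-1} / d_j` (for `j ≥ 1`). -/
def seqC (t : ℕ → ℕ) (j : ℕ) : ℕ := seqD t (j - 1) / seqD t j

/-- The sequence `(t_0, …, t_k)` of positive integers is telescopic if
`c_j · t_j ∈ ⟨t_0, …, t_{j-1}⟩` for every `j = 1, …, k`. -/
def IsTelescopic (t : ℕ → ℕ) (k : ℕ) : Prop :=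
  (∀ i ≤ k, 0 < t i) ∧ ∀ j, 1 ≤ j → j ≤ k → seqC t j * t j ∈ genBy t j

/-- `O(T)`: the number of odd elements of `T`. -/
noncomputable def countOdd (T : Set ℕ) : ℕ := {x ∈ T | Odd x}.ncard

/-- `E(T)`: the number of even elements of `T`. -/
noncomputable def countEven (T : Set ℕ) : ℕ := {x ∈ T | Even x}.ncard

namespace PGaux
open Finset

/-- lift digits to a total function -/
def digLift {a k : ℕ} (x : Fin k → Fin a) : ℕ → ℕ :=
  fun i => if h : i < k then (x ⟨i, h⟩ : ℕ) else 0

/-- `w(x) = ∑_{i<k} x_i a^{k-(i+1)} b^{i+1}`, the Apéry-set elements -/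
def wsum (a b k : ℕ) (x : Fin k → Fin a) : ℕ :=
  ∑ i ∈ Finset.range k, digLift x i * (a ^ (k - (i+1)) * b ^ (i+1))

lemma wsum_succ (a b k : ℕ) (x : Fin (k+1) → Fin a) :
    wsum a b (k+1) x = a * wsum a b k (Fin.init x) + (x (Fin.last k) : ℕ) * b ^ (k+1) := by
  unfold wsum
  rw [Finset.sum_range_succ, Finset.mul_sum]
  congr 1
  · apply Finset.sum_congr rfl
    intro i hi
    rw [Finset.mem_range] at hi
    have h1 : digLift x i = digLift (Fin.init x) i := by
      simp only [digLift, dif_pos hi, dif_pos (Nat.lt_succ_of_lt hi)]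
      congr 1
    have h2 : (k+1) - (i+1) = (k - (i+1)) + 1 := by omega
    rw [h1, h2, pow_succ]
    ring
  · have : digLift x k = (x (Fin.last k) : ℕ) := by
      simp [digLift, Fin.last]
    rw [this]
    simp

lemma wsum_snoc (a b k : ℕ) (x : Fin k → Fin a) (d : Fin a) :
    wsum a b (k+1) (Fin.snoc x d) = a * wsum a b k x + (d : ℕ) * b ^ (k+1) := by
  rw [wsum_succ, Fin.init_snoc, Fin.snoc_last]

lemma norm (a b : ℕ) (ha : 0 < a) :
    ∀ (k : ℕ) (y : ℕ → ℕ), ∃ (x0 : ℕ) (x : Fin k → Fin a),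
      ∑ i ∈ Finset.range (k+1), y i * (a ^ (k - i) * b ^ i) = x0 * a ^ k + wsum a b k x := by
  intro k
  induction k with
  | zero =>
    intro y
    exact ⟨y 0, Fin.elim0, by simp [wsum]⟩
  | succ k ih =>
    intro y
    set q := y (k+1) / a with hq
    set d := y (k+1) % a with hd
    have hda : d < a := Nat.mod_lt _ ha
    set y' : ℕ → ℕ := fun i => if i = k then y k + q * b else y i with hy'
    obtain ⟨x0, x, hx⟩ := ih y'
    refine ⟨x0, Fin.snoc x ⟨d, hda⟩, ?_⟩
    have key : ∑ i ∈ Finset.range (k+2), y i * (a ^ (k+1 - i) * b ^ i)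
        = a * (∑ i ∈ Finset.range (k+1), y' i * (a ^ (k - i) * b ^ i)) + d * b ^ (k+1) := by
      rw [Finset.sum_range_succ, Finset.mul_sum, Finset.sum_range_succ (n := k),
        Finset.sum_range_succ (n := k)]
      have h1 : ∀ i ∈ Finset.range k, y i * (a ^ (k+1 - i) * b ^ i)
          = a * (y' i * (a ^ (k - i) * b ^ i)) := by
        intro i hi
        rw [Finset.mem_range] at hi
        have : y' i = y i := by simp [hy', Nat.ne_of_lt hi]
        rw [this]
        have h2 : k + 1 - i = (k - i) + 1 := by omega
        rw [h2, pow_succ]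
        ring
      rw [Finset.sum_congr rfl h1]
      have hyk : y' k = y k + q * b := by simp [hy']
      have hykk : y (k+1) = a * q + d := by
        rw [hq, hd]; exact (Nat.div_add_mod _ a).symm
      rw [hyk, hykk]
      have e1 : k + 1 - k = 1 := by omega
      rw [e1]
      simp only [Nat.sub_self, pow_zero, pow_one]
      ring
    rw [key, hx, wsum_snoc]
    push_cast
    ring

lemma inj (a b : ℕ) (ha : 0 < a) (hgcd : Nat.gcd a b = 1) :
    ∀ (k : ℕ) (x x' : Fin k → Fin a),
      wsum a b k x % a ^ k = wsum a b k x' % a ^ k → x = x' := by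
  intro k
  induction k with
  | zero => intro x x' _; funext i; exact i.elim0
  | succ k ih =>
    intro x x' h
    rw [wsum_succ, wsum_succ] at h
    set W := wsum a b k (Fin.init x) with hW
    set W' := wsum a b k (Fin.init x') with hW'
    set c := (x (Fin.last k) : ℕ) with hc
    set c' := (x' (Fin.last k) : ℕ) with hc'
    set B := b ^ (k+1) with hB
    have hmodeq : a * W + c * B ≡ a * W' + c' * B [MOD a ^ (k+1)] := h
    have hmoda : a * W + c * B ≡ a * W' + c' * B [MOD a] :=
      hmodeq.of_dvd (dvd_pow_self a (Nat.succ_ne_zero k))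
    have hcB : c * B ≡ c' * B [MOD a] := by
      have h1 : (a * W + c * B) % a = (c * B) % a := Nat.mul_add_mod a W (c * B)
      have h2 : (a * W' + c' * B) % a = (c' * B) % a := Nat.mul_add_mod a W' (c' * B)
      unfold Nat.ModEq at hmoda ⊢
      omega
    have hcop : Nat.gcd a B = 1 := Nat.Coprime.pow_right _ hgcd
    have hcc : c ≡ c' [MOD a] := Nat.ModEq.cancel_right_of_coprime hcop hcB
    have hceq : c = c' := by
      have := hcc
      unfold Nat.ModEq at this
      rwa [Nat.mod_eq_of_lt (x (Fin.last k)).isLt, Nat.mod_eq_of_lt (x' (Fin.last k)).isLt] at this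
    have hlast : x (Fin.last k) = x' (Fin.last k) := Fin.ext hceq
    have hWW : a * W ≡ a * W' [MOD a ^ (k+1)] := by
      rw [hceq] at hmodeq
      exact hmodeq.add_right_cancel' _
    have hWmod : W % a ^ k = W' % a ^ k := by
      have e : a ^ (k+1) = a * a ^ k := by ring
      have h1 : (a * W) % (a * a ^ k) = a * (W % a ^ k) := Nat.mul_mod_mul_left a W (a ^ k)
      have h2 : (a * W') % (a * a ^ k) = a * (W' % a ^ k) := Nat.mul_mod_mul_left a W' (a ^ k)
      unfold Nat.ModEq at hWW
      rw [e, h1, h2] at hWW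
      exact Nat.eq_of_mul_eq_mul_left ha hWW
    have hinit : Fin.init x = Fin.init x' := ih _ _ hWmod
    rw [← Fin.snoc_init_self x, ← Fin.snoc_init_self x', hinit, hlast]

lemma mem_iff (a b k : ℕ) (ha : 0 < a) (n : ℕ) :
    n ∈ genBy (fun i => a ^ (k - i) * b ^ i) (k + 1) ↔
      ∃ (x0 : ℕ) (x : Fin k → Fin a), n = x0 * a ^ k + wsum a b k x := by
  constructor
  · rintro ⟨y, rfl⟩
    exact norm a b ha k y
  · rintro ⟨x0, x, rfl⟩
    refine ⟨fun i => if i = 0 then x0 else digLift x (i - 1), ?_⟩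
    rw [Finset.sum_range_succ']
    simp only [if_pos rfl, Nat.add_sub_cancel, if_neg (Nat.succ_ne_zero _)]
    rw [Nat.sub_zero, pow_zero, mul_one, add_comm]
    rfl

lemma min_class (a b k : ℕ) (ha : 0 < a) (hgcd : Nat.gcd a b = 1) (n : ℕ)
    (hn : n ∈ genBy (fun i => a ^ (k - i) * b ^ i) (k + 1)) (x : Fin k → Fin a)
    (hr : n % a ^ k = wsum a b k x % a ^ k) : wsum a b k x ≤ n := by
  obtain ⟨x0, x', rfl⟩ := (mem_iff a b k ha n).1 hn
  have h1 : (x0 * a ^ k + wsum a b k x') % a ^ k = wsum a b k x' % a ^ k := by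
    rw [add_comm, Nat.add_mul_mod_self_right]
  have hx : x' = x := inj a b ha hgcd k x' x (by rw [← h1, ← hr])
  rw [hx]
  exact Nat.le_add_left _ _

/-- the gap set as a finset -/
def gapF (a b k : ℕ) : Finset ℕ :=
  univ.biUnion (fun x : Fin k → Fin a =>
    (range (wsum a b k x / a ^ k)).image (fun j => wsum a b k x - (j + 1) * a ^ k))

lemma resid_image (a b k : ℕ) (ha : 0 < a) (hgcd : Nat.gcd a b = 1) :
    (univ.image fun x : Fin k → Fin a => wsum a b k x % a ^ k) = range (a ^ k) := by
  apply Finset.eq_of_subset_of_card_le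
  · intro r hr
    simp only [Finset.mem_image] at hr
    obtain ⟨x, _, rfl⟩ := hr
    exact Finset.mem_range.2 (Nat.mod_lt _ (pow_pos ha k))
  · rw [Finset.card_range, Finset.card_image_of_injective _ (fun x x' h => inj a b ha hgcd k x x' h),
      Finset.card_univ, Fintype.card_fun, Fintype.card_fin, Fintype.card_fin]

lemma mem_gapF_not_mem (a b k : ℕ) (ha : 0 < a) (hgcd : Nat.gcd a b = 1) (n : ℕ) :
    n ∈ gapF a b k ↔ n ∉ genBy (fun i => a ^ (k - i) * b ^ i) (k + 1) := by
  have hm : 0 < a ^ k := pow_pos ha k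
  constructor
  · intro hn hnS
    simp only [gapF, Finset.mem_biUnion, Finset.mem_image, Finset.mem_range, Finset.mem_univ,
      true_and] at hn
    obtain ⟨x, j, hj, rfl⟩ := hn
    have hjm : (j + 1) * a ^ k ≤ wsum a b k x :=
      (Nat.le_div_iff_mul_le hm).1 (Nat.succ_le_of_lt hj)
    have hmod : (wsum a b k x - (j + 1) * a ^ k) % a ^ k = wsum a b k x % a ^ k := by
      conv_rhs => rw [← Nat.sub_add_cancel hjm]
      rw [Nat.add_mul_mod_self_right]
    have := min_class a b k ha hgcd _ hnS x hmod
    have hlt : wsum a b k x - (j + 1) * a ^ k < wsum a b k x :=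
      Nat.sub_lt_self (by positivity) hjm
    omega
  · intro hnS
    have hr : n % a ^ k ∈ range (a ^ k) := Finset.mem_range.2 (Nat.mod_lt _ hm)
    rw [← resid_image a b k ha hgcd, Finset.mem_image] at hr
    obtain ⟨x, _, hx⟩ := hr
    set w := wsum a b k x with hw
    have hnw : n < w := by
      by_contra hge
      push_neg at hge
      have hdvd : a ^ k ∣ n - w := (Nat.modEq_iff_dvd' hge).1 hx
      obtain ⟨t, ht⟩ := hdvd
      apply hnS
      refine (mem_iff a b k ha n).2 ⟨t, x, ?_⟩
      rw [mul_comm (a ^ k) t] at ht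
      omega
    have hdvd : a ^ k ∣ w - n := (Nat.modEq_iff_dvd' hnw.le).1 hx.symm
    obtain ⟨t, ht⟩ := hdvd
    rw [mul_comm (a ^ k) t] at ht
    have ht1 : 1 ≤ t := by
      by_contra h0
      push_neg at h0
      interval_cases t
      simp at ht
      omega
    simp only [gapF, Finset.mem_biUnion, Finset.mem_image, Finset.mem_range, Finset.mem_univ,
      true_and]
    have e1 : (t - 1 + 1) = t := by omega
    refine ⟨x, t - 1, ?_, ?_⟩
    · rw [Nat.lt_iff_add_one_le, Nat.le_div_iff_mul_le hm, e1]
      omega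
    · rw [e1]
      omega

lemma neg_one_pow_mul_odd {m : ℕ} (hm : Odd m) (t : ℕ) : ((-1 : ℤ)) ^ (t * m) = (-1) ^ t := by
  rcases Nat.even_or_odd t with ht | ht
  · rw [ht.neg_one_pow, (ht.mul_right m).neg_one_pow]
  · rw [ht.neg_one_pow, (ht.mul hm).neg_one_pow]

lemma two_mul_sum_gap (a b k : ℕ) (ha : 0 < a) (hgcd : Nat.gcd a b = 1) (haodd : Odd a) :
    2 * ∑ n ∈ gapF a b k, (-1 : ℤ) ^ (n + 1)
      = (∑ x : Fin k → Fin a, (-1 : ℤ) ^ wsum a b k x) - 1 := by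
  have hm : 0 < a ^ k := pow_pos ha k
  have hmodd : Odd (a ^ k) := haodd.pow
  set m := a ^ k with hmdef
  have hres : ∀ (x : Fin k → Fin a) (n : ℕ),
      n ∈ (range (wsum a b k x / m)).image (fun j => wsum a b k x - (j + 1) * m) →
      n % m = wsum a b k x % m := by
    intro x n hn
    simp only [Finset.mem_image, Finset.mem_range] at hn
    obtain ⟨j, hj, rfl⟩ := hn
    have hjm : (j + 1) * m ≤ wsum a b k x :=
      (Nat.le_div_iff_mul_le hm).1 (Nat.succ_le_of_lt hj)
    conv_rhs => rw [← Nat.sub_add_cancel hjm]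
    rw [Nat.add_mul_mod_self_right]
  have hdisj : Set.PairwiseDisjoint (↑(univ : Finset (Fin k → Fin a)) : Set (Fin k → Fin a))
      (fun x : Fin k → Fin a =>
        (range (wsum a b k x / m)).image (fun j => wsum a b k x - (j + 1) * m)) := by
    intro x _ x' _ hne
    simp only [Function.onFun]
    rw [Finset.disjoint_left]
    intro n hn hn'
    exact hne (inj a b ha hgcd k x x' (by rw [← hres x n hn, ← hres x' n hn']))
  rw [gapF, Finset.sum_biUnion hdisj]
  have hinner : ∀ x : Fin k → Fin a,
      ∑ n ∈ (range (wsum a b k x / m)).image (fun j => wsum a b k x - (j + 1) * m),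
        (-1 : ℤ) ^ (n + 1)
      = (-1 : ℤ) ^ wsum a b k x * (if Even (wsum a b k x / m) then 0 else 1) := by
    intro x
    set w := wsum a b k x with hw
    rw [Finset.sum_image]
    · have hterm : ∀ j ∈ range (w / m), (-1 : ℤ) ^ (w - (j + 1) * m + 1)
          = (-1 : ℤ) ^ w * (-1) ^ j := by
        intro j hj
        have hjm : (j + 1) * m ≤ w :=
          (Nat.le_div_iff_mul_le hm).1 (Nat.succ_le_of_lt (Finset.mem_range.1 hj))
        have hc : ((-1 : ℤ)) ^ (w - (j + 1) * m) * (-1) ^ ((j + 1) * m) = (-1) ^ w := by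
          rw [← pow_add, Nat.sub_add_cancel hjm]
        have hc2 : ((-1 : ℤ)) ^ ((j + 1) * m) * (-1) ^ ((j + 1) * m) = 1 := by
          rw [← pow_add]
          exact Even.neg_one_pow ⟨(j + 1) * m, rfl⟩
        have hsub : ((-1 : ℤ)) ^ (w - (j + 1) * m) = (-1) ^ w * (-1) ^ ((j + 1) * m) := by
          calc ((-1 : ℤ)) ^ (w - (j + 1) * m)
              = ((-1 : ℤ)) ^ (w - (j + 1) * m) * (((-1 : ℤ)) ^ ((j+1)*m) * (-1) ^ ((j+1)*m)) := by
                rw [hc2, mul_one]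
            _ = (((-1 : ℤ)) ^ (w - (j + 1) * m) * ((-1) ^ ((j+1)*m))) * (-1) ^ ((j+1)*m) := by
                ring
            _ = (-1 : ℤ) ^ w * (-1) ^ ((j + 1) * m) := by rw [hc]
        rw [pow_succ, hsub, neg_one_pow_mul_odd hmodd (j + 1), pow_succ]
        ring
      rw [Finset.sum_congr rfl hterm, ← Finset.mul_sum, neg_one_geom_sum]
    · intro j hj j' hj' hjj
      have h1 : (j + 1) * m ≤ w :=
        (Nat.le_div_iff_mul_le hm).1 (Nat.succ_le_of_lt (Finset.mem_range.1 hj))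
      have h2 : (j' + 1) * m ≤ w :=
        (Nat.le_div_iff_mul_le hm).1 (Nat.succ_le_of_lt (Finset.mem_range.1 hj'))
      have h3 : (j + 1) * m = (j' + 1) * m := by simp only at hjj; omega
      have := Nat.eq_of_mul_eq_mul_right hm h3
      omega
  rw [Finset.sum_congr rfl (fun x _ => hinner x), Finset.mul_sum]
  have hperx : ∀ x : Fin k → Fin a,
      2 * ((-1 : ℤ) ^ wsum a b k x * (if Even (wsum a b k x / m) then 0 else 1))
      = (-1 : ℤ) ^ wsum a b k x - (-1) ^ (wsum a b k x % m) := by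
    intro x
    set w := wsum a b k x with hw
    have hdm : m * (w / m) + w % m = w := Nat.div_add_mod w m
    have hsplit : ((-1 : ℤ)) ^ w = (-1) ^ (w / m) * (-1) ^ (w % m) := by
      conv_lhs => rw [← hdm]
      rw [pow_add, mul_comm m (w / m), neg_one_pow_mul_odd hmodd]
    rcases Nat.even_or_odd (w / m) with hq | hq
    · rw [if_pos hq, hsplit, hq.neg_one_pow]
      ring
    · rw [if_neg (by simpa [Nat.not_even_iff_odd] using hq), hsplit, hq.neg_one_pow]
      ring
  rw [Finset.sum_congr rfl (fun x _ => hperx x), Finset.sum_sub_distrib]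
  have hlast : ∑ x : Fin k → Fin a, ((-1 : ℤ)) ^ (wsum a b k x % m) = 1 := by
    have h1 : ∑ r ∈ (univ.image fun x : Fin k → Fin a => wsum a b k x % m), ((-1 : ℤ)) ^ r
        = ∑ x : Fin k → Fin a, ((-1 : ℤ)) ^ (wsum a b k x % m) :=
      Finset.sum_image (fun x _ x' _ h => inj a b ha hgcd k x x' h)
    rw [← h1, resid_image a b k ha hgcd, neg_one_geom_sum,
      if_neg (by simpa [Nat.not_even_iff_odd] using hmodd)]
  rw [hlast]

lemma count_diff (a b k : ℕ) (ha : 0 < a) (hgcd : Nat.gcd a b = 1) :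
    (countOdd (genBy (fun i => a ^ (k - i) * b ^ i) (k + 1))ᶜ : ℤ)
      - (countEven (genBy (fun i => a ^ (k - i) * b ^ i) (k + 1))ᶜ : ℤ)
      = ∑ n ∈ gapF a b k, (-1 : ℤ) ^ (n + 1) := by
  have hset : (genBy (fun i => a ^ (k - i) * b ^ i) (k + 1))ᶜ = ↑(gapF a b k) := by
    ext n
    simp only [Set.mem_compl_iff, Finset.coe_sort_coe, Finset.mem_coe]
    exact (mem_gapF_not_mem a b k ha hgcd n).symm
  have hO : countOdd (genBy (fun i => a ^ (k - i) * b ^ i) (k + 1))ᶜ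
      = ((gapF a b k).filter (fun n => Odd n)).card := by
    rw [countOdd, hset]
    rw [show {x ∈ (↑(gapF a b k) : Set ℕ) | Odd x}
        = ↑((gapF a b k).filter (fun n => Odd n)) by ext n; simp]
    exact Set.ncard_coe_finset _
  have hE : countEven (genBy (fun i => a ^ (k - i) * b ^ i) (k + 1))ᶜ
      = ((gapF a b k).filter (fun n => ¬ Odd n)).card := by
    rw [countEven, hset]
    rw [show {x ∈ (↑(gapF a b k) : Set ℕ) | Even x}
        = ↑((gapF a b k).filter (fun n => ¬ Odd n)) by
      ext n; simp [Nat.not_odd_iff_even]]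
    exact Set.ncard_coe_finset _
  rw [hO, hE, ← Finset.sum_filter_add_sum_filter_not (gapF a b k) (fun n => Odd n)]
  have h1 : ∑ n ∈ (gapF a b k).filter (fun n => Odd n), (-1 : ℤ) ^ (n + 1)
      = ((gapF a b k).filter (fun n => Odd n)).card := by
    rw [Finset.sum_congr rfl (fun n hn => ?_), Finset.sum_const, nsmul_eq_mul, mul_one]
    have hodd : Odd n := (Finset.mem_filter.1 hn).2
    exact Even.neg_one_pow (by simpa using hodd.add_one)
  have h2 : ∑ n ∈ (gapF a b k).filter (fun n => ¬ Odd n), (-1 : ℤ) ^ (n + 1)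
      = -(((gapF a b k).filter (fun n => ¬ Odd n)).card : ℤ) := by
    rw [Finset.sum_congr rfl (fun n hn => ?_), Finset.sum_const, nsmul_eq_mul, mul_neg_one]
    have heven : Even n := Nat.not_odd_iff_even.1 (Finset.mem_filter.1 hn).2
    exact Odd.neg_one_pow (by simpa using heven.add_one)
  rw [h1, h2]
  ring

lemma W1_bothodd (a b k : ℕ) (haodd : Odd a) (hbodd : Odd b) :
    ∑ x : Fin k → Fin a, (-1 : ℤ) ^ wsum a b k x = 1 := by
  have hx : ∀ x : Fin k → Fin a, (-1 : ℤ) ^ wsum a b k x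
      = ∏ i : Fin k, (-1 : ℤ) ^ ((x i : ℕ)) := by
    intro x
    rw [wsum, ← Finset.prod_pow_eq_pow_sum]
    rw [← Fin.prod_univ_eq_prod_range
      (fun i => (-1 : ℤ) ^ (digLift x i * (a ^ (k - (i+1)) * b ^ (i+1)))) k]
    apply Finset.prod_congr rfl
    intro i _
    have hdig : digLift x (i : ℕ) = (x i : ℕ) := by
      simp [digLift, i.isLt]
    rw [hdig, neg_one_pow_mul_odd ((haodd.pow).mul (hbodd.pow))]
  rw [Finset.sum_congr rfl (fun x _ => hx x)]
  have := (Finset.prod_univ_sum (fun _ : Fin k => (univ : Finset (Fin a)))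
    (fun _ v => (-1 : ℤ) ^ (v : ℕ))).symm
  rw [Fintype.piFinset_univ] at this
  rw [this]
  have hinner : ∑ v : Fin a, (-1 : ℤ) ^ (v : ℕ) = 1 := by
    rw [Fin.sum_univ_eq_sum_range (fun j => (-1 : ℤ) ^ j) a, neg_one_geom_sum,
      if_neg (by simpa [Nat.not_even_iff_odd] using haodd)]
  rw [Finset.prod_congr rfl (fun i _ => hinner)]
  simp

lemma W1_beven (a b k : ℕ) (hbeven : Even b) :
    ∑ x : Fin k → Fin a, (-1 : ℤ) ^ wsum a b k x = ((a : ℤ)) ^ k := by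
  have hx : ∀ x : Fin k → Fin a, (-1 : ℤ) ^ wsum a b k x = 1 := by
    intro x
    apply Even.neg_one_pow
    rw [Nat.even_iff, ← Nat.dvd_iff_mod_eq_zero]
    apply Finset.dvd_sum
    intro i _
    exact Dvd.dvd.mul_left
      (Dvd.dvd.mul_left (dvd_pow hbeven.two_dvd (Nat.succ_ne_zero i)) _) _
  rw [Finset.sum_congr rfl (fun x _ => hx x), Finset.sum_const, Finset.card_univ,
    Fintype.card_fun, Fintype.card_fin, Fintype.card_fin]
  push_cast
  ring

lemma genBy_swap_sub (a b k : ℕ) (s : ℕ) :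
    s ∈ genBy (fun i => a ^ (k - i) * b ^ i) (k + 1) →
      s ∈ genBy (fun i => b ^ (k - i) * a ^ i) (k + 1) := by
  rintro ⟨x, rfl⟩
  refine ⟨fun i => x (k - i), ?_⟩
  rw [← Finset.sum_range_reflect (fun j => x j * (a ^ (k - j) * b ^ j)) (k + 1)]
  apply Finset.sum_congr rfl
  intro j hj
  rw [Finset.mem_range] at hj
  have e1 : k + 1 - 1 - j = k - j := by omega
  have e2 : k - (k - j) = j := by omega
  rw [e1, e2]
  ring

lemma genBy_swap (a b k : ℕ) :
    genBy (fun i => a ^ (k - i) * b ^ i) (k + 1)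
      = genBy (fun i => b ^ (k - i) * a ^ i) (k + 1) := by
  ext s
  exact ⟨genBy_swap_sub a b k s, genBy_swap_sub b a k s⟩

lemma case_oddeven (a b k : ℕ) (ha : 0 < a) (hgcd : Nat.gcd a b = 1)
    (haodd : Odd a) (hbeven : Even b) :
    (countOdd (genBy (fun i => a ^ (k - i) * b ^ i) (k + 1))ᶜ : ℤ)
      - (countEven (genBy (fun i => a ^ (k - i) * b ^ i) (k + 1))ᶜ : ℤ)
      = ((a ^ k : ℤ) - 1) / 2 := by
  have hcd := count_diff a b k ha hgcd
  have h2 := two_mul_sum_gap a b k ha hgcd haodd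
  rw [W1_beven a b k hbeven] at h2
  rw [hcd]
  push_cast
  omega

end PGaux

theorem parity_geometric (a b k : ℕ) (ha : 0 < a) (hb : 0 < b) (hk : 0 < k)
    (hgcd : Nat.gcd a b = 1) :
    (Odd a ∨ Odd b) ∧
      ((Odd a ∧ Odd b) →
        (countOdd (genBy (fun i => a ^ (k - i) * b ^ i) (k + 1))ᶜ : ℤ)
          - (countEven (genBy (fun i => a ^ (k - i) * b ^ i) (k + 1))ᶜ : ℤ) = 0) ∧
      ((Odd a ∧ Even b) →
        (countOdd (genBy (fun i => a ^ (k - i) * b ^ i) (k + 1))ᶜ : ℤ)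
          - (countEven (genBy (fun i => a ^ (k - i) * b ^ i) (k + 1))ᶜ : ℤ)
          = ((a ^ k : ℤ) - 1) / 2) ∧
      ((Even a ∧ Odd b) →
        (countOdd (genBy (fun i => a ^ (k - i) * b ^ i) (k + 1))ᶜ : ℤ)
          - (countEven (genBy (fun i => a ^ (k - i) * b ^ i) (k + 1))ᶜ : ℤ)
          = ((b ^ k : ℤ) - 1) / 2) := by
  refine ⟨?_, ?_, ?_, ?_⟩
  · by_contra h
    push_neg at h
    obtain ⟨h1, h2⟩ := h
    rw [Nat.not_odd_iff_even] at h1 h2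
    have : (2 : ℕ) ∣ Nat.gcd a b := Nat.dvd_gcd h1.two_dvd h2.two_dvd
    rw [hgcd] at this
    omega
  · rintro ⟨haodd, hbodd⟩
    have hcd := PGaux.count_diff a b k ha hgcd
    have h2 := PGaux.two_mul_sum_gap a b k ha hgcd haodd
    rw [PGaux.W1_bothodd a b k haodd hbodd] at h2
    rw [hcd]
    omega
  · rintro ⟨haodd, hbeven⟩
    exact PGaux.case_oddeven a b k ha hgcd haodd hbeven
  · rintro ⟨haeven, hbodd⟩
    rw [PGaux.genBy_swap a b k]
    exact PGaux.case_oddeven b a k hb (by rwa [Nat.gcd_comm]) hbodd haeven
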